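/- Let λ ⊢ n be a partition whose i-th removable box lies in row k, and let T ∈ SYT(λ) have index i. Let u ∈ S_n be the permutation with u ↝ (T, CSS_i(λ)) and ũ ∈ S_{n−1} the permutation with ũ ↝ (d_i(T), d_i(CSS_i(λ))) under the RSK correspondence. Then the one-line notation of u is obtained from that of ũ by inserting n after the (n−k)-th entry: u = ũ_1⋯ũ_{n−k} n ũ_{n−k+1}⋯ũ_{n−1}. -/

import Mathlib

namespace KLPaper

open Equiv

/-! ### Partitions and standard Young tableaux, represented as lists of rows -/

/-- `lam` is a partition of `n`: a weakly decreasing list of positive parts summing to `n`. -/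
def IsPartition (n : ℕ) (lam : List ℕ) : Prop :=
  lam.Pairwise (· ≥ ·) ∧ (∀ x ∈ lam, 0 < x) ∧ lam.sum = n

/-- The entry of a tableau in row `i`, column `j` (0-based); `0` if out of range. -/
def entryAt (T : List (List ℕ)) (i j : ℕ) : ℕ := (T.getD i []).getD j 0

/-- `T` is a standard Young tableau of shape `lam`: rows have the prescribed lengths,
rows and columns strictly increase, and the multiset of entries is `{1, …, n}`. -/
def IsSYT (lam : List ℕ) (T : List (List ℕ)) : Prop :=
  T.map List.length = lam ∧
  (∀ r ∈ T, r.Pairwise (· < ·)) ∧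
  (∀ i j : ℕ, i + 1 < T.length → j < (T.getD (i + 1) []).length →
    entryAt T i j < entryAt T (i + 1) j) ∧
  T.flatten.Perm (List.range' 1 lam.sum)

/-- The (0-based) index of the row of a tableau containing the value `v`. -/
def rowOf (T : List (List ℕ)) (v : ℕ) : ℕ := T.findIdx (fun r => r.contains v)

/-- The (0-based) index of the column of a tableau containing the value `v`. -/
def colOf (T : List (List ℕ)) (v : ℕ) : ℕ := (T.getD (rowOf T v) []).idxOf v

/-- `j` is a descent of `T` : the value `j+1` lies in a strictly lower row than `j`. -/
def Descent (T : List (List ℕ)) (j : ℕ) : Prop := rowOf T j < rowOf T (j + 1)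

/-- The number of removable boxes of `lam` occurring in the rows `0, …, upto - 1`. -/
def removableCount (lam : List ℕ) (upto : ℕ) : ℕ :=
  ((List.range upto).filter (fun i => decide (lam.getD (i + 1) 0 < lam.getD i 0))).length

/-- The total number of removable boxes of a partition. -/
def numRemovable (lam : List ℕ) : ℕ := removableCount lam lam.length

/-- The (1-based, numbered from the top) list of rows containing removable boxes. -/
def removableRows (lam : List ℕ) : List ℕ :=
  (List.range lam.length).filter (fun i => decide (lam.getD (i + 1) 0 < lam.getD i 0))

/-- The index of a standard Young tableau: the (1-based, counted from the top) number of the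
removable box containing the largest entry `n`. -/
def idx (T : List (List ℕ)) : ℕ :=
  removableCount (T.map List.length) (rowOf T T.flatten.length + 1)

/-- Delete the `i`-th (1-based) removable box from a partition. -/
def deleteRemovable (lam : List ℕ) (i : ℕ) : List ℕ :=
  let row := (removableRows lam).getD (i - 1) 0
  (lam.set row (lam.getD row 0 - 1)).filter (fun x => decide (0 < x))

/-- Delete the box containing the largest entry from a standard Young tableau. -/
def deleteMax (T : List (List ℕ)) : List (List ℕ) :=
  let i := rowOf T T.flatten.length
  (T.set i ((T.getD i []).dropLast)).filter (fun r => !r.isEmpty)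

/-! ### Promotion and (partial) evacuation -/

/-- Overwrite the entry of `T` in position `(i, j)` with `v`. -/
def setEntry (T : List (List ℕ)) (i j v : ℕ) : List (List ℕ) :=
  T.set i ((T.getD i []).set j v)

/-- Slide a hole at position `(i, j)` north-west to the corner `(0,0)`, at each step swapping
the hole with the larger of the entries above it and to its left. -/
def slideNW : ℕ → ℕ → ℕ → List (List ℕ) → List (List ℕ)
  | 0, _, _, T => T
  | fuel + 1, i, j, T =>
    if i = 0 ∧ j = 0 then T
    else if i = 0 then slideNW fuel i (j - 1) (setEntry T i j (entryAt T i (j - 1)))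
    else if j = 0 then slideNW fuel (i - 1) j (setEntry T i j (entryAt T (i - 1) j))
    else if entryAt T i (j - 1) < entryAt T (i - 1) j then
      slideNW fuel (i - 1) j (setEntry T i j (entryAt T (i - 1) j))
    else slideNW fuel i (j - 1) (setEntry T i j (entryAt T i (j - 1)))

/-- Jeu-de-taquin promotion of a standard Young tableau: remove the largest entry, slide the
hole to the north-west corner, increment every entry, and place `1` in the corner. -/
def promote (T : List (List ℕ)) : List (List ℕ) :=
  let n := T.flatten.length
  let i := rowOf T n
  let j := colOf T n
  let T' := slideNW (i + j) i j T
  setEntry (T'.map (fun r => r.map (· + 1))) 0 0 1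

/-- Slide a hole at `(i, j)` south-east, at each step swapping the hole with the smaller of
its right and lower neighbours among the entries `≤ m`; stops when no such neighbour exists,
returning the resulting filling and the final position of the hole. -/
def slideOut (m : ℕ) : ℕ → ℕ → ℕ → List (List ℕ) → List (List ℕ) × ℕ × ℕ
  | 0, i, j, T => (T, i, j)
  | fuel + 1, i, j, T =>
    let r := entryAt T i (j + 1)
    let d := entryAt T (i + 1) j
    let rOk := decide (1 ≤ r ∧ r ≤ m)
    let dOk := decide (1 ≤ d ∧ d ≤ m)
    if rOk && dOk then
      if r < d then slideOut m fuel i (j + 1) (setEntry T i j r)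
      else slideOut m fuel (i + 1) j (setEntry T i j d)
    else if rOk then slideOut m fuel i (j + 1) (setEntry T i j r)
    else if dOk then slideOut m fuel (i + 1) j (setEntry T i j d)
    else (T, i, j)

/-- Inverse promotion applied to the sub-standard-tableau consisting of the entries
`1, …, m` of `T` (the remaining entries are fixed): remove the entry `1`, slide the hole
south-east within the unfixed region, decrement the remaining unfixed entries and place `m`
in the final position of the hole. -/
def prInvOn (T : List (List ℕ)) (m : ℕ) : List (List ℕ) :=
  let res := slideOut m T.flatten.length 0 0 T
  setEntry (res.1.map (fun row => row.map (fun v => if 2 ≤ v ∧ v ≤ m then v - 1 else v)))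
    res.2.1 res.2.2 m

/-- The partial evacuation `ev_k`: starting with the `k` smallest entries unfixed, repeatedly
perform inverse promotion on the unfixed entries and fix the largest unfixed entry.
`evacOn T n` (where `n` is the number of boxes) is the Schützenberger involution. -/
def evacOn : List (List ℕ) → ℕ → List (List ℕ)
  | T, 0 => T
  | T, m + 1 => evacOn (prInvOn T (m + 1)) m

/-! ### RSK -/

/-- Schensted insertion of `x` into a row: returns the new row and the bumped entry. -/
def insertRow : List ℕ → ℕ → List ℕ × Option ℕ
  | [], x => ([x], none)
  | y :: ys, x =>
    if x < y then (x :: ys, some y)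
    else
      let p := insertRow ys x
      (y :: p.1, p.2)

/-- Schensted row insertion of `x` into a tableau. -/
def insertTab : List (List ℕ) → ℕ → List (List ℕ)
  | [], x => [[x]]
  | r :: rs, x =>
    let p := insertRow r x
    match p.2 with
    | none => p.1 :: rs
    | some y => p.1 :: insertTab rs y

/-- Add the label `k` to the recording tableau `Q` in the unique new box of `P'`. -/
def addBox (Q P' : List (List ℕ)) (k : ℕ) : List (List ℕ) :=
  match (List.range P'.length).find?
      (fun i => decide ((Q.getD i []).length < (P'.getD i []).length)) with
  | some i => if i < Q.length then Q.set i ((Q.getD i []) ++ [k]) else Q ++ [[k]]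
  | none => Q

/-- RSK insertion of a word, producing the pair (insertion tableau, recording tableau). -/
def RSKword : List ℕ → ℕ → List (List ℕ) × List (List ℕ) → List (List ℕ) × List (List ℕ)
  | [], _, PQ => PQ
  | x :: xs, k, PQ =>
    let P' := insertTab PQ.1 x
    RSKword xs (k + 1) (P', addBox PQ.2 P' k)

/-- The one-line notation (with values `1, …, n`) of a permutation of `Fin n`. -/
def oneLine (n : ℕ) (v : Perm (Fin n)) : List ℕ :=
  (List.finRange n).map (fun i => (v i : ℕ) + 1)

/-- The RSK correspondence `v ↝ (P, Q)` for permutations. -/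
def RSKmap (n : ℕ) (v : Perm (Fin n)) : List (List ℕ) × List (List ℕ) :=
  RSKword (oneLine n v) 1 ([], [])

/-! ### Coxeter length, Bruhat order, Kazhdan–Lusztig polynomials for `S_n` -/

/-- `s` is a simple transposition `(j, j+1)`. -/
def IsSimpleT {n : ℕ} (s : Perm (Fin n)) : Prop :=
  ∃ j : ℕ, ∃ h : j + 1 < n, s = Equiv.swap ⟨j, Nat.lt_of_succ_lt h⟩ ⟨j + 1, h⟩

/-- The Coxeter length of a permutation: the minimal length of a word in the
simple transpositions expressing it. -/
noncomputable def len {n : ℕ} (w : Perm (Fin n)) : ℕ :=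
  sInf {k | ∃ L : List (Perm (Fin n)), L.length = k ∧ (∀ s ∈ L, IsSimpleT s) ∧ L.prod = w}

/-- One step in the Bruhat order: multiply by a transposition, increasing the length. -/
def BruhatStep {n : ℕ} (x y : Perm (Fin n)) : Prop :=
  (∃ i j : Fin n, i ≠ j ∧ y = x * Equiv.swap i j) ∧ len x < len y

/-- The Bruhat order on `S_n`. -/
def BruhatLe {n : ℕ} : Perm (Fin n) → Perm (Fin n) → Prop :=
  Relation.ReflTransGen BruhatStep

/-- The strict Bruhat order on `S_n`. -/
def BruhatLt {n : ℕ} (x y : Perm (Fin n)) : Prop := BruhatLe x y ∧ x ≠ y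

theorem bruhatLe_len_le {n : ℕ} {x y : Perm (Fin n)} (h : BruhatLe x y) : len x ≤ len y := by
  induction h with
  | refl => exact le_rfl
  | tail _ h2 ih => exact ih.trans h2.2.le

theorem bruhatLt_len_lt {n : ℕ} {x y : Perm (Fin n)} (h : BruhatLt x y) : len x < len y := by
  rcases Relation.ReflTransGen.cases_head h.1 with rfl | ⟨c, hc, hcy⟩
  · exact absurd rfl h.2
  · exact lt_of_lt_of_le hc.2 (bruhatLe_len_le hcy)

open Classical in
/-- A choice of simple transposition `s` with `len (s * w) < len w`, if one exists. -/
noncomputable def descChoice {n : ℕ} (w : Perm (Fin n)) : Option (Perm (Fin n)) :=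
  if h : ∃ s : Perm (Fin n), IsSimpleT s ∧ len (s * w) < len w then some h.choose else none

theorem descChoice_spec {n : ℕ} {w s : Perm (Fin n)} (h : descChoice w = some s) :
    len (s * w) < len w := by
  unfold descChoice at h
  split at h
  · rename_i hex
    obtain rfl : hex.choose = s := Option.some.inj h
    exact hex.choose_spec.2
  · exact absurd h (by simp)

open Classical in
/-- The Kazhdan–Lusztig polynomials `P_{v,w}` of the symmetric group, defined through the
standard recursion: `P_{w,w} = 1`, `P_{v,w} = 0` unless `v ≤ w` in Bruhat order, and for a
simple reflection `s` with `sw < w`,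
`P_{v,w} = q^{1-c} P_{sv,sw} + q^c P_{v,sw} - ∑_{v ≤ z < sw, sz < z} μ(z,sw) q^{(ℓ(w)-ℓ(z))/2} P_{v,z}`
where `c = 1` if `sv < v` and `c = 0` otherwise, and `μ(z,w')` is the coefficient of
`q^{(ℓ(w')-ℓ(z)-1)/2}` in `P_{z,w'}` (zero unless `ℓ(w') - ℓ(z)` is odd). -/
noncomputable def KLpoly {n : ℕ} (v w : Perm (Fin n)) : Polynomial ℤ :=
  if v = w then 1
  else if ¬ BruhatLt v w then 0
  else
    match hd : descChoice w with
    | none => 0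
    | some s =>
      have hlt : len (s * w) < len w := descChoice_spec hd
      Polynomial.X ^ (if len (s * v) < len v then 0 else 1) * KLpoly (s * v) (s * w)
      + Polynomial.X ^ (if len (s * v) < len v then 1 else 0) * KLpoly v (s * w)
      - ∑ z ∈ (Finset.univ.filter (fun z : Perm (Fin n) =>
            BruhatLe v z ∧ BruhatLt z (s * w) ∧ len (s * z) < len z ∧
              (len (s * w) - len z) % 2 = 1)).attach,
          Polynomial.C ((KLpoly z.1 (s * w)).coeff ((len (s * w) - len z.1 - 1) / 2))
            * Polynomial.X ^ ((len w - len z.1) / 2) * KLpoly v z.1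
termination_by len w
decreasing_by
  · exact hlt
  · exact hlt
  · exact hlt
  · have hz := z.2
    simp only [Finset.mem_filter] at hz
    exact lt_trans (bruhatLt_len_lt hz.2.2.1) hlt

open Classical in
/-- The Kazhdan–Lusztig `μ`-coefficient for a pair of permutations: the coefficient of
`q^{(ℓ(w)-ℓ(v)-1)/2}` in `P_{v,w}` for `v < w`, extended symmetrically, and `0` if `v` and
`w` are Bruhat-incomparable (or `ℓ(w) - ℓ(v)` is even). -/
noncomputable def muBarP {n : ℕ} (v w : Perm (Fin n)) : ℤ :=
  if BruhatLt v w ∧ (len w - len v) % 2 = 1 then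
    (KLpoly v w).coeff ((len w - len v - 1) / 2)
  else if BruhatLt w v ∧ (len v - len w) % 2 = 1 then
    (KLpoly w v).coeff ((len v - len w - 1) / 2)
  else 0

/-! ### The row-superstandard recording tableau and `μ̄` for tableaux -/

/-- Auxiliary: fill rows consecutively starting from `start`. -/
def rowStdAux : List ℕ → ℕ → List (List ℕ)
  | [], _ => []
  | a :: rest, start => ((List.range a).map (start + ·)) :: rowStdAux rest (start + a)

/-- The row-superstandard tableau of a given shape: `1, 2, …` filled row by row. -/
def rowStd (lam : List ℕ) : List (List ℕ) := rowStdAux lam 1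

open Classical in
/-- The Kazhdan–Lusztig `μ̄`-coefficient for a pair of standard Young tableaux of the same
shape with `n` boxes: `μ̄(T,R) = μ̄(v,w)` where `v ↝ (T,Q)`, `w ↝ (R,Q)` under RSK for a
fixed recording tableau `Q` of that shape. -/
noncomputable def muBarTab (n : ℕ) (T R : List (List ℕ)) : ℤ :=
  if hT : ∃ v : Perm (Fin n), RSKmap n v = (T, rowStd (T.map List.length)) then
    if hR : ∃ w : Perm (Fin n), RSKmap n w = (R, rowStd (T.map List.length)) then
      muBarP hT.choose hR.choose
    else 0
  else 0

/-! ### The Specht module with its Kazhdan–Lusztig basis -/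

/-- The Kazhdan–Lusztig basis vector `C_T` of the Specht module, realised inside the space of
complex-valued functions on the standard Young tableaux of shape `lam`. -/
def KLvec {lam : List ℕ} (T : {T : List (List ℕ) // IsSYT lam T}) :
    {T : List (List ℕ) // IsSYT lam T} → ℂ :=
  fun R => if R = T then 1 else 0

open Classical in
/-- `ρ` is an action of `S_n` on the span of the tableaux of shape `lam` realising the
Kazhdan–Lusztig basis action on the Specht module `S^lam`:
`s_j · C_T = -C_T` if `j ∈ D(T)`, and
`s_j · C_T = C_T + ∑_{R, j ∈ D(R)} μ̄(T,R) C_R` otherwise. -/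
def KLActionHyp (n : ℕ) (lam : List ℕ)
    (ρ : Representation ℂ (Perm (Fin n)) ({T : List (List ℕ) // IsSYT lam T} → ℂ)) : Prop :=
  ∀ (j : ℕ) (h1 : 1 ≤ j) (h2 : j < n) (T : {T : List (List ℕ) // IsSYT lam T}),
    ρ (Equiv.swap ⟨j - 1, by omega⟩ ⟨j, h2⟩) (KLvec T) =
      if Descent T.1 j then -KLvec T
      else KLvec T + fun R => if Descent R.1 j then ((muBarTab n T.1 R.1 : ℤ) : ℂ) else 0

open Classical in
/-- Promotion as a map on the standard Young tableaux of shape `lam`. -/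
noncomputable def prT {lam : List ℕ} (T : {T : List (List ℕ) // IsSYT lam T}) :
    {T : List (List ℕ) // IsSYT lam T} :=
  if h : IsSYT lam (promote T.1) then ⟨promote T.1, h⟩ else T

open Classical in
/-- Partial evacuation `ev_k` as a map on the standard Young tableaux of shape `lam`. -/
noncomputable def evT {lam : List ℕ} (k : ℕ) (T : {T : List (List ℕ) // IsSYT lam T}) :
    {T : List (List ℕ) // IsSYT lam T} :=
  if h : IsSYT lam (evacOn T.1 k) then ⟨evacOn T.1 k, h⟩ else T

/-! ### Distinguished permutations -/

/-- The permutation of `Fin n` reversing the first `k` elements `0, …, k-1` (i.e. reversing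
the values `1, …, k` in one-line notation) and fixing the rest. -/
def revFirst (n k : ℕ) (hk : k ≤ n) : Perm (Fin n) :=
  Function.Involutive.toPerm
    (fun i => if h : (i : ℕ) < k then ⟨k - 1 - (i : ℕ), by omega⟩ else i)
    (by
      intro i
      by_cases h : (i : ℕ) < k
      · have h2 : k - 1 - (i : ℕ) < k := by omega
        simp only [h, dif_pos, h2]
        apply Fin.ext
        simp only []
        omega
      · simp [h])

/-- The embedding `S_{n-1} → S_n` (as the permutations fixing the last point). -/
noncomputable def permIncl (n : ℕ) : Perm (Fin (n - 1)) →* Perm (Fin n) :=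
  Equiv.Perm.viaEmbeddingHom (Fin.castLEEmb (Nat.sub_le n 1))

/-! ### Parabolic subgroups, descending and separable permutations -/

/-- The simple transposition `s_{j+1} = (j, j+1)` (0-based `j`). -/
def simpleOf (n j : ℕ) : Perm (Fin n) :=
  if h : j + 1 < n then Equiv.swap ⟨j, by omega⟩ ⟨j + 1, h⟩ else 1

/-- The parabolic (standard Young) subgroup of `S_n` generated by the simple transpositions
`s_{j+1}` for `j ∈ J` (0-based). -/
def parab (n : ℕ) (J : Finset ℕ) : Subgroup (Perm (Fin n)) :=
  Subgroup.closure {s | ∃ j ∈ J, s = simpleOf n j}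

/-- `u` is the longest element of the parabolic subgroup `S_J`. -/
noncomputable def IsLongestOf (n : ℕ) (J : Finset ℕ) (u : Perm (Fin n)) : Prop :=
  u ∈ parab n J ∧ ∀ v ∈ parab n J, len v ≤ len u

/-- A permutation is descending if it is of the form `w_{J_k} ⋯ w_{J_1}` for an increasing
chain `J_1 ⊂ ⋯ ⊂ J_k` of non-empty subsets of the simple transpositions, where `w_J` is the
longest element of the parabolic subgroup `S_J`. -/
noncomputable def Descending (n : ℕ) (w : Perm (Fin n)) : Prop :=
  ∃ (k : ℕ) (Js : Fin k → Finset ℕ) (ws : Fin k → Perm (Fin n)),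
    (∀ i, (Js i).Nonempty ∧ Js i ⊆ Finset.range (n - 1)) ∧
    (∀ i j : Fin k, i < j → Js i ⊂ Js j) ∧
    (∀ i, IsLongestOf n (Js i) (ws i)) ∧
    w = (List.ofFn ws).reverse.prod

/-- A permutation is separable if it avoids the patterns `2413` and `3142`. -/
def Separable (n : ℕ) (w : Perm (Fin n)) : Prop :=
  ¬ ∃ i1 i2 i3 i4 : Fin n, i1 < i2 ∧ i2 < i3 ∧ i3 < i4 ∧
    ((w i3 < w i1 ∧ w i1 < w i4 ∧ w i4 < w i2) ∨
     (w i2 < w i4 ∧ w i4 < w i1 ∧ w i1 < w i3))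

/-! ### Column-superstandard tableaux -/

/-- The number of boxes in column `c` of the shape `lam`. -/
def colHeight (lam : List ℕ) (c : ℕ) : ℕ := (lam.filter (fun x => decide (c < x))).length

/-- The column-superstandard tableau `CSS(lam)`: the values `1, …, n` are placed column by
column, left to right, each column top to bottom. -/
def colStd (lam : List ℕ) : List (List ℕ) :=
  (List.range lam.length).map (fun i =>
    (List.range (lam.getD i 0)).map (fun j =>
      ((List.range j).map (colHeight lam)).sum + i + 1))

/-- The column reading word of a tableau: columns left to right, each read bottom to top. -/
def colReading (T : List (List ℕ)) : List ℕ :=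
  ((List.range (T.getD 0 []).length).map (fun j =>
    (((List.range T.length).filter (fun i => decide (j < (T.getD i []).length))).reverse).map
      (fun i => entryAt T i j))).flatten

/-- The tableau `CSS_i(lam)`: `n` is placed in the `i`-th removable box (in row `k`,
1-based); the values `n-1, …, n-k+1` are placed at the ends of rows `k-1, …, 1`; the
remaining values `1, …, n-k` are placed in the remaining boxes column by column. -/
def cssI (lam : List ℕ) (i : ℕ) : List (List ℕ) :=
  let n := lam.sum
  let row0 := (removableRows lam).getD (i - 1) 0
  let lam' := (List.range lam.length).map
    (fun t => if t ≤ row0 then lam.getD t 0 - 1 else lam.getD t 0)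
  let base := colStd lam'
  (List.range lam.length).map (fun t =>
    if t ≤ row0 then (base.getD t []) ++ [n - (row0 - t)] else base.getD t [])

theorem insertRow_none {R : List ℕ} {x : ℕ} (h : ∀ y ∈ R, ¬ x < y) :
    insertRow R x = (R ++ [x], none) := by
  induction R with
  | nil => rfl
  | cons a as ih =>
    have : ¬ x < a := h a (by simp)
    simp only [insertRow, if_neg this]
    rw [ih (fun y hy => h y (by simp [hy]))]; rfl

theorem insertRow_none' {R R' : List ℕ} {x : ℕ} (h : insertRow R x = (R', none)) :
    R' = R ++ [x] ∧ ∀ y ∈ R, ¬ x < y := by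
  induction R generalizing R' with
  | nil => simp only [insertRow] at h; cases h; simp
  | cons a as ih =>
    simp only [insertRow] at h
    by_cases hx : x < a
    · rw [if_pos hx] at h; cases h
    · rw [if_neg hx] at h
      have h2 : insertRow as x = ((insertRow as x).1, none) := by
        have := congrArg Prod.snd h; simp at this
        rw [Prod.ext_iff]; simp [this]
      obtain ⟨h3, h4⟩ := ih h2
      have h5 := congrArg Prod.fst h; simp at h5
      constructor
      · rw [← h5, h3]; simp
      · intro y hy; rcases List.mem_cons.1 hy with rfl | hy
        · exact hx
        · exact h4 y hy

theorem insertRow_some {R R' : List ℕ} {x y : ℕ} (h : insertRow R x = (R', some y)) :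
    ∃ pre post, R = pre ++ y :: post ∧ R' = pre ++ x :: post ∧ x < y ∧ ∀ a ∈ pre, ¬ x < a := by
  induction R generalizing R' with
  | nil => simp only [insertRow] at h; cases h
  | cons a as ih =>
    simp only [insertRow] at h
    by_cases hx : x < a
    · rw [if_pos hx] at h
      obtain ⟨h1, h2⟩ := Prod.mk.injEq .. ▸ h
      refine ⟨[], as, by simp [← Option.some_inj.1 h2], by simp [← h1], ?_, by simp⟩
      rw [← Option.some_inj.1 h2]; exact hx
    · rw [if_neg hx] at h
      have h2 : insertRow as x = ((insertRow as x).1, some y) := by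
        have := congrArg Prod.snd h; simp at this
        rw [Prod.ext_iff]; simp [this]
      obtain ⟨pre, post, h3, h4, h5, h6⟩ := ih h2
      have h7 := congrArg Prod.fst h; simp at h7
      exact ⟨a :: pre, post, by simp [h3], by simp [← h7, h4], h5,
        by rintro b hb; rcases List.mem_cons.1 hb with rfl | hb; exacts [hx, h6 b hb]⟩

def addAtRow (P : List (List ℕ)) (m : ℕ) (v : ℕ) : List (List ℕ) :=
  if m < P.length then P.set m (P.getD m [] ++ [v]) else P ++ [[v]]

def newRow : List (List ℕ) → ℕ → ℕ
  | [], _ => 0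
  | r :: rs, x => match (insertRow r x).2 with
    | none => 0
    | some y => newRow rs y + 1

theorem addAtRow_nil (m v : ℕ) : addAtRow [] m v = [[v]] := by simp [addAtRow]

theorem addAtRow_cons_zero (R : List ℕ) (P : List (List ℕ)) (v : ℕ) :
    addAtRow (R :: P) 0 v = (R ++ [v]) :: P := by simp [addAtRow]

theorem addAtRow_cons_succ (R : List ℕ) (P : List (List ℕ)) (m v : ℕ) :
    addAtRow (R :: P) (m + 1) v = R :: addAtRow P m v := by
  simp only [addAtRow, List.length_cons, Nat.succ_lt_succ_iff]
  by_cases h : m < P.length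
  · simp [h]
  · simp [h]

theorem addAtRow_getD {Q : List (List ℕ)} {r : ℕ} (h : r ≤ Q.length) (v j : ℕ) :
    (addAtRow Q r v).getD j [] = if j = r then Q.getD r [] ++ [v] else Q.getD j [] := by
  induction r generalizing Q j with
  | zero =>
    cases Q with
    | nil => cases j <;> simp [addAtRow_nil]
    | cons R P => cases j <;> simp [addAtRow_cons_zero]
  | succ r ih =>
    cases Q with
    | nil => simp at h
    | cons R P =>
      rw [addAtRow_cons_succ]
      cases j with
      | zero => simp
      | succ j =>
        simp only [List.getD_cons_succ]
        rw [ih (by simpa using h)]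
        by_cases hj : j = r <;> simp [hj]

theorem addAtRow_length {Q : List (List ℕ)} {r : ℕ} (v : ℕ) :
    (addAtRow Q r v).length = if r < Q.length then Q.length else Q.length + 1 := by
  simp only [addAtRow]; split <;> simp

theorem addAtRow_flatten_perm {Q : List (List ℕ)} {r : ℕ} (v : ℕ) (h : r ≤ Q.length) :
    (addAtRow Q r v).flatten.Perm (v :: Q.flatten) := by
  induction r generalizing Q with
  | zero =>
    cases Q with
    | nil => simp [addAtRow_nil]
    | cons R P =>
      rw [addAtRow_cons_zero]
      simp only [List.flatten_cons, List.append_assoc, List.singleton_append]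
      exact List.perm_middle
  | succ r ih =>
    cases Q with
    | nil => simp at h
    | cons R P =>
      rw [addAtRow_cons_succ]
      simp only [List.flatten_cons]
      exact ((ih (by simpa using h)).append_left R).trans List.perm_middle

theorem newRow_le (P : List (List ℕ)) (x : ℕ) : newRow P x ≤ P.length := by
  induction P generalizing x with
  | nil => simp [newRow]
  | cons r rs ih =>
    simp only [newRow]
    cases h : (insertRow r x).2 with
    | none => simp
    | some y => simpa using ih y

theorem insertTab_cons_none {r : List ℕ} {x : ℕ} (rs : List (List ℕ))
    (h : (insertRow r x).2 = none) : insertTab (r :: rs) x = (insertRow r x).1 :: rs := by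
  simp [insertTab, h]

theorem insertTab_cons_some {r : List ℕ} {x y : ℕ} (rs : List (List ℕ))
    (h : (insertRow r x).2 = some y) :
    insertTab (r :: rs) x = (insertRow r x).1 :: insertTab rs y := by
  simp [insertTab, h]

theorem newRow_cons_none {r : List ℕ} {x : ℕ} (rs : List (List ℕ))
    (h : (insertRow r x).2 = none) : newRow (r :: rs) x = 0 := by
  simp [newRow, h]

theorem newRow_cons_some {r : List ℕ} {x y : ℕ} (rs : List (List ℕ))
    (h : (insertRow r x).2 = some y) : newRow (r :: rs) x = newRow rs y + 1 := by
  simp [newRow, h]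

theorem pair_eq {α β : Type*} (p : α × β) : p = (p.1, p.2) := rfl

theorem ins_getD_len (P : List (List ℕ)) (x j : ℕ) :
    ((insertTab P x).getD j []).length
      = (P.getD j []).length + (if j = newRow P x then 1 else 0) := by
  induction P generalizing x j with
  | nil =>
    cases j <;> simp [insertTab, newRow]
  | cons r rs ih =>
    cases h : (insertRow r x).2 with
    | none =>
      rw [insertTab_cons_none rs h, newRow_cons_none rs h]
      obtain ⟨h1, _⟩ := insertRow_none' ((pair_eq _).trans (by rw [h]))
      cases j with
      | zero => simp [h1]
      | succ j => simp
    | some y =>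
      rw [insertTab_cons_some rs h, newRow_cons_some rs h]
      obtain ⟨pre, post, h1, h2, _, _⟩ := insertRow_some ((pair_eq _).trans (by rw [h]))
      cases j with
      | zero => simp only [List.getD_cons_zero]; rw [h2, h1]; simp
      | succ j => simpa [Nat.succ_inj] using ih y j

theorem ins_length (P : List (List ℕ)) (x : ℕ) :
    (insertTab P x).length = max P.length (newRow P x + 1) := by
  induction P generalizing x with
  | nil => simp [insertTab, newRow]
  | cons r rs ih =>
    cases h : (insertRow r x).2 with
    | none => rw [insertTab_cons_none rs h, newRow_cons_none rs h]; simp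
    | some y =>
      rw [insertTab_cons_some rs h, newRow_cons_some rs h]
      simp only [List.length_cons, ih y]
      omega

theorem ins_flatten_perm (P : List (List ℕ)) (x : ℕ) :
    (insertTab P x).flatten.Perm (x :: P.flatten) := by
  induction P generalizing x with
  | nil => simp [insertTab]
  | cons r rs ih =>
    cases h : (insertRow r x).2 with
    | none =>
      rw [insertTab_cons_none rs h]
      obtain ⟨h1, _⟩ := insertRow_none' ((pair_eq _).trans (by rw [h]))
      rw [h1]
      simp only [List.flatten_cons, List.append_assoc, List.singleton_append]
      exact List.perm_middle
    | some y =>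
      rw [insertTab_cons_some rs h]
      obtain ⟨pre, post, h1, h2, _, _⟩ := insertRow_some ((pair_eq _).trans (by rw [h]))
      rw [h2, h1]
      simp only [List.flatten_cons, List.append_assoc, List.cons_append]
      refine List.Perm.trans List.perm_middle ?_
      refine List.Perm.trans (List.Perm.cons x (((ih y).append_left post).append_left pre)) ?_
      refine List.Perm.trans (List.Perm.cons x ?_) (List.Perm.cons x (List.perm_middle.symm))
      exact List.Perm.trans (List.perm_middle.append_left pre) List.perm_middle

def RowsOK (P : List (List ℕ)) : Prop := ∀ R ∈ P, R ≠ [] ∧ R.Pairwise (· < ·)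

theorem ins_rowsOK {P : List (List ℕ)} {x : ℕ} (hP : RowsOK P) (hnd : P.flatten.Nodup)
    (hx : x ∉ P.flatten) : RowsOK (insertTab P x) := by
  induction P generalizing x with
  | nil =>
    intro R hR
    simp only [insertTab, List.mem_singleton] at hR
    subst hR; exact ⟨by simp, by simp⟩
  | cons r rs ih =>
    simp only [List.flatten_cons, List.nodup_append] at hnd
    obtain ⟨hnd1, hnd2, hdisj⟩ := hnd
    simp only [List.flatten_cons, List.mem_append] at hx
    push_neg at hx
    obtain ⟨hx1, hx2⟩ := hx
    have hr := hP r (by simp)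
    cases h : (insertRow r x).2 with
    | none =>
      rw [insertTab_cons_none rs h]
      obtain ⟨h1, h2⟩ := insertRow_none' ((pair_eq _).trans (by rw [h]))
      intro R hR
      rcases List.mem_cons.1 hR with rfl | hR
      · rw [h1]
        refine ⟨by simp, ?_⟩
        rw [List.pairwise_append]
        refine ⟨hr.2, by simp, ?_⟩
        intro a ha b hb
        rw [List.mem_singleton] at hb; subst hb
        have := h2 a ha
        have : a ≠ b := fun hab => hx1 (hab ▸ ha)
        omega
      · exact hP R (by simp [hR])
    | some y =>
      rw [insertTab_cons_some rs h]
      obtain ⟨pre, post, h1, h2, hxy, hpre⟩ := insertRow_some ((pair_eq _).trans (by rw [h]))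
      intro R hR
      rcases List.mem_cons.1 hR with rfl | hR
      · rw [h2]
        refine ⟨by simp, ?_⟩
        have hsor := hr.2
        rw [h1, List.pairwise_append] at hsor
        obtain ⟨hs1, hs2, hs3⟩ := hsor
        rw [List.pairwise_cons] at hs2
        rw [List.pairwise_append, List.pairwise_cons]
        refine ⟨hs1, ⟨fun b hb => lt_trans hxy (hs2.1 b hb), hs2.2⟩, ?_⟩
        intro a ha b hb
        rcases List.mem_cons.1 hb with rfl | hb
        · have h3 := hpre a ha
          have : a ≠ b := fun hab => hx1 (hab ▸ (h1 ▸ (by simp [ha] : a ∈ pre ++ y :: post)))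
          omega
        · exact hs3 a ha b (by simp [hb])
      · refine ih (fun R hR => hP R (by simp [hR])) hnd2 ?_ R hR
        intro hy
        exact hdisj y (h1 ▸ (by simp : y ∈ pre ++ y :: post)) y hy rfl

theorem insert_max {P : List (List ℕ)} {x : ℕ} (h : ∀ y ∈ P.flatten, y < x) :
    insertTab P x = addAtRow P 0 x ∧ newRow P x = 0 := by
  cases P with
  | nil => exact ⟨by simp [insertTab, addAtRow], by simp [newRow]⟩
  | cons r rs =>
    have h0 : insertRow r x = (r ++ [x], none) :=
      insertRow_none (fun y hy => by have := h y (by simp [hy]); omega)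
    constructor
    · rw [insertTab_cons_none rs (by rw [h0]), h0, addAtRow_cons_zero]
    · exact newRow_cons_none rs (by rw [h0])

theorem insertRow_append_max {r : List ℕ} {x n : ℕ} (h : ∀ y ∈ r, ¬ x < y) (hx : x < n) :
    insertRow (r ++ [n]) x = (r ++ [x], some n) := by
  induction r with
  | nil => simp [insertRow, hx]
  | cons a as ih =>
    have : ¬ x < a := h a (by simp)
    simp only [List.cons_append, insertRow, if_neg this, List.append_eq]
    rw [ih (fun y hy => h y (by simp [hy]))]

theorem bstep {P : List (List ℕ)} {x n m : ℕ}
    (hn : ∀ y ∈ P.flatten, y < n) (hx : x < n) (hr : newRow P x = m) :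
    insertTab (addAtRow P m n) x = addAtRow (insertTab P x) (m + 1) n ∧
      newRow (addAtRow P m n) x = m + 1 := by
  induction P generalizing x m with
  | nil =>
    have hm : m = 0 := by rw [← hr]; rfl
    subst hm
    rw [addAtRow_nil]
    have h1 : insertRow [n] x = ([x], some n) := by simp [insertRow, hx]
    constructor
    · rw [insertTab_cons_some [] (by rw [h1]), h1]
      simp [insertTab, addAtRow]
    · rw [newRow_cons_some [] (by rw [h1])]
      simp [newRow]
  | cons r rs ih =>
    have hflat : ∀ y ∈ rs.flatten, y < n := fun y hy => hn y (by simp [hy])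
    cases h : (insertRow r x).2 with
    | none =>
      have hm : m = 0 := by rw [← hr, newRow_cons_none rs h]
      subst hm
      obtain ⟨h1, h2⟩ := insertRow_none' ((pair_eq _).trans (by rw [h]))
      have h3 := insertRow_append_max h2 hx
      rw [addAtRow_cons_zero]
      obtain ⟨hm1, hm2⟩ := insert_max (P := rs) (x := n) hflat
      constructor
      · rw [insertTab_cons_some rs (by rw [h3]), h3, insertTab_cons_none rs h, h1, hm1,
          addAtRow_cons_succ]
      · rw [newRow_cons_some rs (by rw [h3]), hm2]
    | some y =>
      have hy : y < n := by
        obtain ⟨pre, post, h1, _, _, _⟩ := insertRow_some ((pair_eq _).trans (by rw [h]))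
        exact hn y (by simp [h1])
      obtain ⟨m', hm'⟩ : ∃ m', newRow rs y = m' := ⟨_, rfl⟩
      have hm : m = m' + 1 := by rw [← hr, newRow_cons_some rs h, hm']
      subst hm
      rw [addAtRow_cons_succ]
      obtain ⟨ih1, ih2⟩ := ih hflat hy hm'
      constructor
      · rw [insertTab_cons_some (addAtRow rs m' n) h, insertTab_cons_some rs h, ih1,
          addAtRow_cons_succ]
      · rw [newRow_cons_some (addAtRow rs m' n) h, ih2]



def revRow : List ℕ → ℕ → List ℕ × ℕ
  | [], y => ([], y)
  | a :: as, y =>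
    if as.any (fun b => decide (b < y)) then ((a :: (revRow as y).1), (revRow as y).2)
    else (y :: as, a)

theorem revRow_correct {pre post : List ℕ} {x y : ℕ} (hxy : x < y)
    (hpost : ∀ b ∈ post, ¬ b < y) :
    revRow (pre ++ x :: post) y = (pre ++ y :: post, x) := by
  induction pre with
  | nil =>
    simp only [List.nil_append, revRow]
    have h : post.any (fun b => decide (b < y)) = false := by
      rw [List.any_eq_false]; intro b hb; simpa using hpost b hb
    simp [h]
  | cons a pre ih =>
    simp only [List.cons_append, revRow]
    have h : (pre ++ x :: post).any (fun b => decide (b < y)) = true := by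
      rw [List.any_eq_true]; exact ⟨x, by simp, by simpa using hxy⟩
    simp [h, ih]

def unstep : ℕ → List (List ℕ) → ℕ → List (List ℕ) × ℕ
  | 0, P, y => (P, y)
  | r+1, P, y => unstep r (P.set r (revRow (P.getD r []) y).1) (revRow (P.getD r []) y).2

theorem unstep_cons (r : ℕ) (R : List ℕ) (P : List (List ℕ)) (y : ℕ) :
    unstep (r+1) (R :: P) y =
      ((revRow R (unstep r P y).2).1 :: (unstep r P y).1, (revRow R (unstep r P y).2).2) := by
  induction r generalizing P y with
  | zero => rfl
  | succ r ih =>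
    show unstep (r+1) ((R :: P).set (r+1) _) _ = _
    simp only [List.getD_cons_succ, List.set_cons_succ]
    rw [ih]
    rfl

def extractAt (P : List (List ℕ)) (r : ℕ) : List (List ℕ) × ℕ :=
  unstep r ((P.set r (P.getD r []).dropLast).filter (fun l => !l.isEmpty))
    ((P.getD r []).getLastD 0)

theorem extract_insert {P : List (List ℕ)} {x : ℕ} (hP : RowsOK P) (hnd : P.flatten.Nodup)
    (hx : x ∉ P.flatten) : extractAt (insertTab P x) (newRow P x) = (P, x) := by
  induction P generalizing x with
  | nil => rfl
  | cons r rs ih =>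
    simp only [List.flatten_cons, List.nodup_append] at hnd
    obtain ⟨hnd1, hnd2, hdisj⟩ := hnd
    simp only [List.flatten_cons, List.mem_append] at hx
    push_neg at hx
    obtain ⟨hx1, hx2⟩ := hx
    have hrr := hP r (by simp)
    cases h : (insertRow r x).2 with
    | none =>
      obtain ⟨h1, h2⟩ := insertRow_none' ((pair_eq _).trans (by rw [h]))
      rw [insertTab_cons_none rs h, newRow_cons_none rs h, h1]
      simp only [extractAt, List.getD_cons_zero, List.dropLast_concat, List.getLastD_concat]
      have hset : ((r ++ [x]) :: rs).set 0 r = r :: rs := rfl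
      rw [hset]
      have hfil : (r :: rs).filter (fun l => !l.isEmpty) = r :: rs := by
        rw [List.filter_eq_self]
        intro R hR
        have := (hP R hR).1
        simpa [List.isEmpty_iff]
      rw [hfil]
      rfl
    | some y =>
      obtain ⟨pre, post, h1, h2, hxy, hpre⟩ := insertRow_some ((pair_eq _).trans (by rw [h]))
      rw [insertTab_cons_some rs h, newRow_cons_some rs h, h2]
      have hy : y ∈ r := by rw [h1]; simp
      have ihe := ih (fun R hR => hP R (by simp [hR])) hnd2
        (fun hmem => hdisj y hy y hmem rfl)
      simp only [extractAt] at ihe ⊢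
      simp only [List.getD_cons_succ, List.set_cons_succ, List.filter_cons]
      have hne : ((pre ++ x :: post).isEmpty) = false := by simp
      rw [hne]
      simp only [Bool.not_false, if_pos]
      rw [unstep_cons, ihe]
      have hpost : ∀ b ∈ post, ¬ b < y := by
        intro b hb
        have hsor := hrr.2
        rw [h1, List.pairwise_append] at hsor
        have := (List.pairwise_cons.1 hsor.2.1).1 b hb
        omega
      rw [revRow_correct hxy hpost, ← h1]


/-! definitions copied from the problem file -/
theorem set_getD_self {l : List (List ℕ)} {r : ℕ} (h : r < l.length) :
    l.set r (l.getD r []) = l := by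
  induction l generalizing r with
  | nil => simp at h
  | cons a as ih =>
    cases r with
    | zero => simp
    | succ r => simpa using ih (by simpa using h)

theorem find?_range_eq_some {p : ℕ → Bool} {n r : ℕ} (h1 : r < n) (h2 : p r = true)
    (h3 : ∀ j < r, p j = false) : (List.range n).find? p = some r := by
  induction n with
  | zero => omega
  | succ n ih =>
    rw [List.range_succ, List.find?_append]
    rcases Nat.lt_or_ge r n with h | h
    · rw [ih h]; rfl
    · have he : (List.range n).find? p = none := by
        rw [List.find?_eq_none]
        intro y hy
        rw [h3 y (by have := List.mem_range.mp hy; omega)]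
        simp
      have hrn : r = n := by omega
      rw [he, ← hrn]
      simp [List.find?_cons, h2]

theorem findIdx_rows {l : List (List ℕ)} {p : List ℕ → Bool} {r : ℕ} (h1 : r < l.length)
    (h2 : p (l.getD r []) = true) (h3 : ∀ j < r, p (l.getD j []) = false) :
    l.findIdx p = r := by
  induction l generalizing r with
  | nil => simp at h1
  | cons a as ih =>
    cases r with
    | zero => rw [List.findIdx_cons]; simp only [List.getD_cons_zero] at h2; rw [h2]; rfl
    | succ r =>
      have h0 : p a = false := by simpa using h3 0 (Nat.succ_pos r)
      rw [List.findIdx_cons, h0]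
      simp only [cond_false]
      rw [ih (by simpa using h1) (by simpa using h2)
        (fun j hj => by simpa using h3 (j+1) (by omega))]

theorem mem_flatten_of_getD {Q : List (List ℕ)} {v j : ℕ} (h : v ∈ Q.getD j []) :
    v ∈ Q.flatten := by
  rcases Nat.lt_or_ge j Q.length with hj | hj
  · exact List.mem_flatten.mpr ⟨Q.getD j [], by
      rw [List.getD_eq_getElem _ _ hj]; exact ⟨List.getElem_mem hj, by
        rwa [List.getD_eq_getElem _ _ hj] at h⟩⟩
  · rw [List.getD_eq_default _ _ hj] at h; simp at h

theorem mem_getD_unique {Q : List (List ℕ)} (hnd : Q.flatten.Nodup) {v j1 j2 : ℕ}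
    (h1 : v ∈ Q.getD j1 []) (h2 : v ∈ Q.getD j2 []) : j1 = j2 := by
  induction Q generalizing j1 j2 with
  | nil => cases j1 <;> simp at h1
  | cons R P ih =>
    simp only [List.flatten_cons, List.nodup_append] at hnd
    obtain ⟨_, hnd2, hdisj⟩ := hnd
    cases j1 with
    | zero =>
      cases j2 with
      | zero => rfl
      | succ j2 =>
        simp only [List.getD_cons_zero] at h1
        simp only [List.getD_cons_succ] at h2
        exact absurd (mem_flatten_of_getD h2) (fun h => hdisj v h1 v h rfl)
    | succ j1 =>
      cases j2 with
      | zero =>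
        simp only [List.getD_cons_succ] at h1
        simp only [List.getD_cons_zero] at h2
        exact absurd (mem_flatten_of_getD h1) (fun h => hdisj v h2 v h rfl)
      | succ j2 =>
        simp only [List.getD_cons_succ] at h1 h2
        rw [ih hnd2 h1 h2]

/-! shapes and the addBox identification -/

def ShapeEq (Q P : List (List ℕ)) : Prop :=
  Q.length = P.length ∧ ∀ j, (Q.getD j []).length = (P.getD j []).length

theorem addBox_eq {P Q : List (List ℕ)} (x k : ℕ) (hs : ShapeEq Q P) :
    addBox Q (insertTab P x) k = addAtRow Q (newRow P x) k := by
  have hr : newRow P x ≤ P.length := newRow_le P x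
  have hfind : (List.range (insertTab P x).length).find?
      (fun i => decide ((Q.getD i []).length < ((insertTab P x).getD i []).length))
        = some (newRow P x) := by
    apply find?_range_eq_some
    · rw [ins_length]; omega
    · rw [ins_getD_len P x (newRow P x), if_pos rfl, hs.2 (newRow P x)]; simp
    · intro j hj
      rw [ins_getD_len P x j, if_neg (by omega : ¬ j = newRow P x), hs.2 j]; simp
  unfold addBox
  rw [hfind]
  unfold addAtRow
  rw [hs.1]

theorem shapeEq_step {P Q : List (List ℕ)} (x k : ℕ) (hs : ShapeEq Q P) :
    ShapeEq (addAtRow Q (newRow P x) k) (insertTab P x) := by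
  have hr : newRow P x ≤ Q.length := hs.1 ▸ newRow_le P x
  constructor
  · rw [addAtRow_length, ins_length, hs.1]
    have := newRow_le P x
    rcases Nat.lt_or_ge (newRow P x) P.length with h | h
    · rw [if_pos (hs.1 ▸ h)]; omega
    · rw [if_neg (by omega)]; omega
  · intro j
    rw [addAtRow_getD hr, ins_getD_len P x j]
    by_cases hj : j = newRow P x
    · subst hj
      rw [if_pos rfl, if_pos rfl, List.length_append, hs.2 (newRow P x)]
      simp
    · rw [if_neg hj, if_neg hj, hs.2 j]
      simp

theorem RSKword_append (xs ys : List ℕ) (k : ℕ) (PQ : List (List ℕ) × List (List ℕ)) :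
    RSKword (xs ++ ys) k PQ = RSKword ys (k + xs.length) (RSKword xs k PQ) := by
  induction xs generalizing k PQ with
  | nil => simp [RSKword]
  | cons x xs ih =>
    simp only [List.cons_append, RSKword, List.append_eq]
    rw [ih]
    simp only [List.length_cons]
    have hc : k + 1 + xs.length = k + (xs.length + 1) := by omega
    rw [hc]

/-! the chain invariant -/

theorem chain (w : List ℕ) (hw : w.Nodup) :
    RowsOK (RSKword w 1 ([], [])).1 ∧
    (RSKword w 1 ([], [])).1.flatten.Perm w ∧
    ShapeEq (RSKword w 1 ([], [])).2 (RSKword w 1 ([], [])).1 ∧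
    (RSKword w 1 ([], [])).2.flatten.Perm (List.range' 1 w.length) := by
  induction w using List.reverseRecOn with
  | nil =>
    refine ⟨by intro R hR; simp [RSKword] at hR, by simp [RSKword], ⟨by simp [RSKword], ?_⟩,
      by simp [RSKword]⟩
    intro j; simp [RSKword]
  | append_singleton w x ih =>
    rw [List.nodup_append] at hw
    obtain ⟨hw1, _, hdisj⟩ := hw
    have hxw : x ∉ w := fun hx => hdisj x hx x (by simp) rfl
    obtain ⟨hro, hperm, hs, hqperm⟩ := ih hw1
    set P := (RSKword w 1 ([], [])).1 with hP
    set Q := (RSKword w 1 ([], [])).2 with hQ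
    have hstep : RSKword (w ++ [x]) 1 ([], []) =
        (insertTab P x, addAtRow Q (newRow P x) (1 + w.length)) := by
      rw [RSKword_append]
      show RSKword [x] _ (P, Q) = _
      simp only [RSKword]
      rw [addBox_eq x (1 + w.length) hs]
    have hndP : P.flatten.Nodup := (hperm.nodup_iff).mpr hw1
    have hxP : x ∉ P.flatten := fun h => hxw (hperm.mem_iff.mp h)
    have hrQ : newRow P x ≤ Q.length := hs.1 ▸ newRow_le P x
    rw [hstep]
    refine ⟨ins_rowsOK hro hndP hxP, ?_, shapeEq_step x _ hs, ?_⟩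
    · exact ((ins_flatten_perm P x).trans (hperm.cons x)).trans
        (List.perm_append_singleton x w).symm
    · refine ((addAtRow_flatten_perm _ hrQ).trans ((hqperm.cons _))).trans ?_
      have : List.range' 1 (w.length + 1) = List.range' 1 w.length ++ [1 + w.length] := by
        have h2 := List.range'_concat (step := 1) (s := 1) (n := w.length)
        simpa using h2
      rw [List.length_append, List.length_singleton, this]
      exact (List.perm_append_singleton _ _).symm

/-! labels record the rows where boxes were added -/

def stateAt (w : List ℕ) (t : ℕ) : List (List ℕ) × List (List ℕ) :=
  RSKword (w.take t) 1 ([], [])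

theorem chain_label (w : List ℕ) (hw : w.Nodup) : ∀ t < w.length,
    (t + 1) ∈ ((RSKword w 1 ([], [])).2.getD (newRow (stateAt w t).1 (w.getD t 0)) []) := by
  induction w using List.reverseRecOn with
  | nil => intro t ht; simp at ht
  | append_singleton w x ih =>
    rw [List.nodup_append] at hw
    obtain ⟨hw1, _, hdisj⟩ := hw
    obtain ⟨hro, hperm, hs, hqperm⟩ := chain w hw1
    set P := (RSKword w 1 ([], [])).1 with hP
    set Q := (RSKword w 1 ([], [])).2 with hQ
    have hstep : RSKword (w ++ [x]) 1 ([], []) =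
        (insertTab P x, addAtRow Q (newRow P x) (1 + w.length)) := by
      rw [RSKword_append]
      show RSKword [x] _ (P, Q) = _
      simp only [RSKword]
      rw [addBox_eq x (1 + w.length) hs]
    have hrQ : newRow P x ≤ Q.length := hs.1 ▸ newRow_le P x
    intro t ht
    rw [List.length_append, List.length_singleton] at ht
    rw [hstep]
    dsimp only
    rcases Nat.lt_or_ge t w.length with h | h
    · have hst : stateAt (w ++ [x]) t = stateAt w t := by
        unfold stateAt
        rw [List.take_append_of_le_length (by omega)]
      have hgd : (w ++ [x]).getD t 0 = w.getD t 0 := List.getD_append _ _ _ _ h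
      rw [hst, hgd]
      have := ih hw1 t h
      rw [addAtRow_getD hrQ]
      split
      · next heq => rw [heq] at this; exact List.mem_append_left _ this
      · exact this
    · have htw : t = w.length := by omega
      subst htw
      have hst : stateAt (w ++ [x]) w.length = (P, Q) := by
        unfold stateAt
        rw [List.take_append_of_le_length (le_refl _), List.take_length]
      have hgd : (w ++ [x]).getD w.length 0 = x := by
        rw [List.getD_append_right _ _ _ _ (le_refl _)]
        simp
      rw [hst, hgd, addAtRow_getD hrQ, if_pos rfl]
      simp only [List.mem_append, List.mem_singleton]
      right; omega


/-! decoding: inverse RSK -/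

def decode1 (PQ : List (List ℕ) × List (List ℕ)) : (List (List ℕ) × List (List ℕ)) × ℕ :=
  (((extractAt PQ.1 (rowOf PQ.2 PQ.2.flatten.length)).1, deleteMax PQ.2),
    (extractAt PQ.1 (rowOf PQ.2 PQ.2.flatten.length)).2)

def decodeN : ℕ → List (List ℕ) × List (List ℕ) → List ℕ
  | 0, _ => []
  | t+1, PQ => decodeN t (decode1 PQ).1 ++ [(decode1 PQ).2]

theorem rows_nonempty_of_shape {P Q : List (List ℕ)} (hs : ShapeEq Q P) (hro : RowsOK P) :
    ∀ R ∈ Q, R ≠ [] := by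
  intro R hR
  obtain ⟨j, hj, rfl⟩ := List.mem_iff_getElem.1 hR
  have h1 : (Q.getD j []).length = (P.getD j []).length := hs.2 j
  rw [List.getD_eq_getElem _ _ hj] at h1
  have hjP : j < P.length := hs.1 ▸ hj
  rw [List.getD_eq_getElem _ _ hjP] at h1
  have h2 := (hro _ (List.getElem_mem hjP)).1
  intro hemp
  rw [hemp] at h1
  simp only [List.length_nil] at h1
  exact h2 (List.length_eq_zero_iff.mp h1.symm)

theorem rowOf_addAtRow {Q : List (List ℕ)} {r N : ℕ} (hr : r ≤ Q.length)
    (hN : ∀ v ∈ Q.flatten, v ≠ N) : rowOf (addAtRow Q r N) N = r := by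
  apply findIdx_rows
  · rw [addAtRow_length]; split <;> omega
  · rw [addAtRow_getD hr, if_pos rfl]
    simp [List.contains_iff_mem]
  · intro j hj
    rw [addAtRow_getD hr, if_neg (by omega)]
    simp only [List.contains, Bool.eq_false_iff]
    intro hcon
    exact hN N (mem_flatten_of_getD (List.elem_iff.mp hcon)) rfl

theorem deleteMax_addAtRow {Q : List (List ℕ)} {r N : ℕ} (hr : r ≤ Q.length)
    (hrows : ∀ R ∈ Q, R ≠ [])
    (hrow : rowOf (addAtRow Q r N) (addAtRow Q r N).flatten.length = r) :
    deleteMax (addAtRow Q r N) = Q := by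
  unfold deleteMax
  simp only
  rw [hrow]
  have hgd : (addAtRow Q r N).getD r [] = Q.getD r [] ++ [N] := by
    rw [addAtRow_getD hr]; simp
  rw [hgd, List.dropLast_concat]
  rcases Nat.lt_or_ge r Q.length with h | h
  · have ha : addAtRow Q r N = Q.set r (Q.getD r [] ++ [N]) := by
      unfold addAtRow; rw [if_pos h]
    rw [ha, List.set_set, set_getD_self h, List.filter_eq_self]
    intro R hR
    simpa [List.isEmpty_iff] using hrows R hR
  · have hre : r = Q.length := by omega
    have ha : addAtRow Q r N = Q ++ [[N]] := by
      unfold addAtRow; rw [if_neg (by omega)]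
    have hget : Q.getD r [] = [] := List.getD_eq_default _ _ (by omega)
    rw [ha, hget, List.set_append, if_neg (by omega), List.filter_append]
    have h1 : [[N]].set (r - Q.length) [] = [[]] := by
      rw [hre]; simp
    rw [h1]
    have h2 : List.filter (fun l => !l.isEmpty) [([] : List ℕ)] = [] := rfl
    rw [h2, List.append_nil, List.filter_eq_self]
    intro R hR
    simpa [List.isEmpty_iff] using hrows R hR

theorem dec : ∀ (w : List ℕ), w.Nodup → decodeN w.length (RSKword w 1 ([], [])) = w := by
  intro w
  induction w using List.reverseRecOn with
  | nil => intro _; rfl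
  | append_singleton w x ih =>
    intro hw
    rw [List.nodup_append] at hw
    obtain ⟨hw1, _, hdisj⟩ := hw
    have hxw : x ∉ w := fun hx => hdisj x hx x (by simp) rfl
    obtain ⟨hro, hperm, hs, hqperm⟩ := chain w hw1
    set P := (RSKword w 1 ([], [])).1 with hP
    set Q := (RSKword w 1 ([], [])).2 with hQ
    have hstep : RSKword (w ++ [x]) 1 ([], []) =
        (insertTab P x, addAtRow Q (newRow P x) (1 + w.length)) := by
      rw [RSKword_append]
      show RSKword [x] _ (P, Q) = _
      simp only [RSKword]
      rw [addBox_eq x (1 + w.length) hs]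
    have hndP : P.flatten.Nodup := (hperm.nodup_iff).mpr hw1
    have hxP : x ∉ P.flatten := fun h => hxw (hperm.mem_iff.mp h)
    have hrQ : newRow P x ≤ Q.length := hs.1 ▸ newRow_le P x
    have hlenQ : Q.flatten.length = w.length := by
      rw [hqperm.length_eq, List.length_range']
    have hflat : (addAtRow Q (newRow P x) (1 + w.length)).flatten.length = 1 + w.length := by
      rw [(addAtRow_flatten_perm _ hrQ).length_eq, List.length_cons, hlenQ]
      omega
    have hNmem : ∀ v ∈ Q.flatten, v ≠ 1 + w.length := by
      intro v hv
      have := List.mem_range'_1.mp (hqperm.mem_iff.mp hv)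
      omega
    have hrow : rowOf (addAtRow Q (newRow P x) (1 + w.length)) (1 + w.length) = newRow P x :=
      rowOf_addAtRow hrQ hNmem
    have hdel : deleteMax (addAtRow Q (newRow P x) (1 + w.length)) = Q :=
      deleteMax_addAtRow hrQ (rows_nonempty_of_shape hs hro) (by rw [hflat]; exact hrow)
    have hext : extractAt (insertTab P x) (newRow P x) = (P, x) :=
      extract_insert hro hndP hxP
    have hd1 : decode1 (RSKword (w ++ [x]) 1 ([], [])) = ((P, Q), x) := by
      rw [hstep]
      unfold decode1
      dsimp only
      rw [hflat, hrow, hext, hdel]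
    have hlen : (w ++ [x]).length = w.length + 1 := by simp
    rw [hlen]
    show decodeN w.length (decode1 _).1 ++ [(decode1 _).2] = w ++ [x]
    rw [hd1]
    dsimp only
    rw [show (P, Q) = RSKword w 1 ([], []) from rfl, ih hw1]

theorem rsk_inj {w1 w2 : List ℕ} (h1 : w1.Nodup) (h2 : w2.Nodup)
    (h : RSKword w1 1 ([], []) = RSKword w2 1 ([], [])) : w1 = w2 := by
  have hl1 := (chain w1 h1).2.2.2.length_eq
  have hl2 := (chain w2 h2).2.2.2.length_eq
  rw [h] at hl1
  have hlen : w1.length = w2.length := by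
    rw [hl2] at hl1
    simpa [List.length_range'] using hl1.symm
  rw [← dec w1 h1, ← dec w2 h2, h, hlen]


/-! inserting the largest letter into a word -/

theorem take_succ_getD {l : List ℕ} {t : ℕ} (h : t < l.length) :
    l.take (t+1) = l.take t ++ [l.getD t 0] := by
  rw [List.take_succ, List.getElem?_eq_getElem h, List.getD_eq_getElem _ _ h]
  rfl

theorem shapeEq_addAtRow {P Q : List (List ℕ)} (hs : ShapeEq Q P) (m v v' : ℕ)
    (hm : m ≤ Q.length) : ShapeEq (addAtRow Q m v) (addAtRow P m v') := by
  have hmP : m ≤ P.length := hs.1 ▸ hm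
  constructor
  · rw [addAtRow_length, addAtRow_length, hs.1]
  · intro j
    rw [addAtRow_getD hm, addAtRow_getD hmP]
    by_cases hj : j = m
    · subst hj
      rw [if_pos rfl, if_pos rfl, List.length_append, List.length_append, hs.2 j]
      rfl
    · rw [if_neg hj, if_neg hj]; exact hs.2 j

theorem insert_largest_chain {v : List ℕ} {n p q : ℕ}
    (hlen : v.length = p + q) (hnd : v.Nodup) (hv : ∀ y ∈ v, y < n)
    (hrows : ∀ m < q, newRow (stateAt v (p + m)).1 (v.getD (p + m) 0) = m) :
    ∀ m, m ≤ q → RSKword ((v.take p ++ n :: v.drop p).take (p + 1 + m)) 1 ([], [])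
      = (addAtRow (stateAt v (p + m)).1 m n, addAtRow (stateAt v (p + m)).2 m (p + 1 + m)) := by
  have hp : p ≤ v.length := by omega
  have hlena : (v.take p).length = p := by rw [List.length_take]; omega
  intro m
  induction m with
  | zero =>
    intro _
    have ht : (v.take p ++ n :: v.drop p).take (p + 1 + 0) = v.take p ++ [n] := by
      have : p + 1 + 0 = (v.take p).length + 1 := by omega
      rw [this, List.take_append]
      simp
    rw [ht]
    have hpre : (v.take p).Nodup := (List.take_sublist _ _).nodup hnd
    obtain ⟨hro, hperm, hs, hqperm⟩ := chain (v.take p) hpre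
    rw [show RSKword (v.take p) 1 ([], []) = stateAt v p from rfl] at hs
    have hmax : ∀ y ∈ (stateAt v p).1.flatten, y < n := by
      intro y hy
      exact hv y (List.mem_of_mem_take (hperm.mem_iff.mp hy))
    obtain ⟨hm1, hm2⟩ := insert_max hmax
    rw [RSKword_append]
    show RSKword [n] _ (stateAt v p) = _
    simp only [RSKword, RSKword.eq_1]
    rw [addBox_eq n _ hs, hm1, hm2, hlena]
    have h0 : p + 0 = p := by omega
    have h1 : 1 + p = p + 1 + 0 := by omega
    rw [h0, h1]
  | succ m ih =>
    intro hm1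
    have hmq : m < q := by omega
    have ih2 := ih (by omega)
    have hidx : p + m < v.length := by omega
    set x := v.getD (p + m) 0 with hx
    have hxv : x ∈ v := by
      rw [hx, List.getD_eq_getElem _ _ hidx]
      exact List.getElem_mem hidx
    have hxn : x < n := hv x hxv
    -- old chain invariants at time p + m
    have hpre : (v.take (p+m)).Nodup := (List.take_sublist _ _).nodup hnd
    obtain ⟨hro, hperm, hs, hqperm⟩ := chain (v.take (p+m)) hpre
    rw [show RSKword (v.take (p+m)) 1 ([], []) = stateAt v (p+m) from rfl] at hs
    have hmax : ∀ y ∈ (stateAt v (p+m)).1.flatten, y < n := by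
      intro y hy
      exact hv y (List.mem_of_mem_take (hperm.mem_iff.mp hy))
    have hnr : newRow (stateAt v (p+m)).1 x = m := hrows m hmq
    -- the old chain step
    have hlentake : (v.take (p+m)).length = p + m := by rw [List.length_take]; omega
    have hostep : stateAt v (p + (m+1)) =
        (insertTab (stateAt v (p+m)).1 x, addAtRow (stateAt v (p+m)).2 m (p + m + 1)) := by
      show RSKword (v.take (p + (m+1))) 1 ([], []) = _
      have hts : v.take (p + (m+1)) = v.take (p+m) ++ [x] := by
        have he : p + (m+1) = (p + m) + 1 := by omega
        rw [he, take_succ_getD hidx]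
      rw [hts, RSKword_append]
      show RSKword [x] _ (stateAt v (p+m)) = _
      simp only [RSKword]
      rw [addBox_eq x _ hs, hnr, hlentake]
      have : 1 + (p + m) = p + m + 1 := by omega
      rw [this]
    -- the new chain step
    have hb := bstep (P := (stateAt v (p+m)).1) (x := x) (n := n) (m := m) hmax hxn hnr
    have hwlen : ((v.take p ++ n :: v.drop p).take (p + 1 + m)).length = p + 1 + m := by
      rw [List.length_take]
      simp only [List.length_append, List.length_cons, List.length_drop, hlena]
      omega
    have hnts : (v.take p ++ n :: v.drop p).take (p + 1 + (m+1))
        = (v.take p ++ n :: v.drop p).take (p + 1 + m) ++ [x] := by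
      have hl2 : p + 1 + m < (v.take p ++ n :: v.drop p).length := by
        simp only [List.length_append, List.length_cons, List.length_drop, hlena]
        omega
      have he : p + 1 + (m + 1) = (p + 1 + m) + 1 := by omega
      rw [he, take_succ_getD hl2]
      congr 2
      rw [List.getD_append_right _ _ _ _ (by omega : (v.take p).length ≤ p + 1 + m), hlena]
      have : p + 1 + m - p = m + 1 := by omega
      rw [this, List.getD_cons_succ]
      rw [hx, List.getD_eq_getElem _ _ (by rw [List.length_drop]; omega),
        List.getD_eq_getElem _ _ hidx, List.getElem_drop]
    rw [hnts, RSKword_append, ih2, hwlen]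
    show RSKword [x] _ _ = _
    simp only [RSKword]
    have hmlen : m ≤ (stateAt v (p+m)).2.length := by
      rw [hs.1]
      calc m = newRow (stateAt v (p+m)).1 x := hnr.symm
        _ ≤ _ := newRow_le _ _
    rw [addBox_eq x _ (shapeEq_addAtRow hs m (p + 1 + m) n hmlen), hb.2, hb.1, hostep]
    have he1 : 1 + (p + 1 + m) = p + 1 + (m + 1) := by omega
    have he2 : p + m + 1 = p + 1 + m := by omega
    rw [he1, he2]


/-! defs copied from the problem file -/
theorem getD_map_range {α : Type} (f : ℕ → α) (d : α) {L t : ℕ} (h : t < L) :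
    ((List.range L).map f).getD t d = f t := by
  rw [List.getD_eq_getElem _ _ (by simpa using h)]
  simp

theorem map_getD_range_self (l : List ℕ) :
    (List.range l.length).map (fun t => l.getD t 0) = l := by
  apply List.ext_getElem (by simp)
  intro t h1 h2
  simp only [List.getElem_map, List.getElem_range]
  rw [List.getD_eq_getElem _ _ h2]

theorem len_getD {T : List (List ℕ)} {t : ℕ} (h : t < T.length) :
    (T.getD t []).length = (T.map List.length).getD t 0 := by
  rw [List.getD_eq_getElem _ _ h, List.getD_eq_getElem _ _ (by simpa using h)]
  simp

theorem rowOf_mem {T : List (List ℕ)} {v : ℕ} (h : v ∈ T.flatten) :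
    v ∈ T.getD (rowOf T v) [] ∧ rowOf T v < T.length := by
  obtain ⟨R, hR, hvR⟩ := List.mem_flatten.mp h
  have hex : ∃ R ∈ T, R.contains v = true := ⟨R, hR, List.elem_iff.mpr hvR⟩
  have hlt : T.findIdx (fun r => r.contains v) < T.length :=
    List.findIdx_lt_length_of_exists hex
  have h2 := List.findIdx_getElem (w := hlt)
  unfold rowOf
  constructor
  · rw [List.getD_eq_getElem _ _ hlt]
    exact List.elem_iff.mp h2
  · exact hlt

theorem sorted_max_last {R : List ℕ} {v : ℕ} (hs : R.Pairwise (· < ·)) (hv : v ∈ R)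
    (hmax : ∀ y ∈ R, y ≤ v) : ∃ R', R = R' ++ [v] := by
  have hne : R ≠ [] := List.ne_nil_of_mem hv
  have hsplit := List.dropLast_append_getLast hne
  rcases (by rw [← hsplit] at hv; simpa using hv :
      v ∈ R.dropLast ∨ v = R.getLast hne) with hmem | heq
  · exfalso
    have hpw : R.Pairwise (· < ·) := hs
    rw [← hsplit, List.pairwise_append] at hpw
    have h1 := hpw.2.2 v hmem (R.getLast hne) (by simp)
    have h2 := hmax (R.getLast hne) (List.getLast_mem hne)
    omega
  · exact ⟨R.dropLast, by rw [← heq] at hsplit; exact hsplit.symm⟩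

theorem getD_antitone {lam : List ℕ} (hs : lam.Pairwise (· ≥ ·)) {a b : ℕ} (hab : a ≤ b) :
    lam.getD b 0 ≤ lam.getD a 0 := by
  rcases Nat.lt_or_ge b lam.length with hb | hb
  · have ha : a < lam.length := by omega
    rw [List.getD_eq_getElem _ _ hb, List.getD_eq_getElem _ _ ha]
    rcases Nat.eq_or_lt_of_le hab with rfl | hlt
    · exact le_refl _
    · exact List.pairwise_iff_getElem.mp hs a b ha hb hlt
  · rw [List.getD_eq_default _ _ hb]
    exact Nat.zero_le _

theorem drop_single {X : List (List ℕ)} {r : ℕ} (h : r + 1 = X.length) :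
    X.drop r = [X.getD r []] := by
  have hdl : (X.drop r).length = 1 := by rw [List.length_drop]; omega
  obtain ⟨a, ha⟩ := List.length_eq_one_iff.mp hdl
  rw [ha]
  have h2 : a = (X.drop r).getD 0 [] := by rw [ha]; rfl
  rw [h2, List.getD_eq_getElem _ _ (by omega : 0 < (X.drop r).length), List.getElem_drop,
    List.getD_eq_getElem _ _ (by omega : r < X.length)]
  simp

theorem addAtRow_deleteMax {X : List (List ℕ)} {r N : ℕ}
    (hrows : ∀ R ∈ X, R ≠ [])
    (hflatlen : X.flatten.length = N)
    (hrow : rowOf X N = r)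
    (hlast : ∃ R', X.getD r [] = R' ++ [N])
    (hemp : (X.getD r []).length = 1 → r + 1 = X.length) :
    addAtRow (deleteMax X) r N = X := by
  obtain ⟨R', hR'⟩ := hlast
  have hrlen : r < X.length := by
    by_contra h
    rw [List.getD_eq_default _ _ (by omega)] at hR'
    exact absurd hR'.symm (by simp)
  unfold deleteMax
  simp only
  rw [hflatlen, hrow, hR', List.dropLast_concat]
  by_cases hR : R' = []
  · subst hR
    have hre : r + 1 = X.length := hemp (by rw [hR']; rfl)
    have hset : X.set r [] = X.take r ++ [[]] := by
      rw [List.set_eq_take_append_cons_drop, if_pos hrlen]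
      have : X.drop (r + 1) = [] := by
        apply List.drop_eq_nil_of_le
        omega
      rw [this]
    rw [hset, List.filter_append]
    have h1 : List.filter (fun l => !l.isEmpty) [([] : List ℕ)] = [] := rfl
    have h2 : (X.take r).filter (fun l => !l.isEmpty) = X.take r := by
      rw [List.filter_eq_self]
      intro R hRt
      simpa [List.isEmpty_iff] using hrows R (List.mem_of_mem_take hRt)
    rw [h1, h2, List.append_nil]
    have h3 : addAtRow (X.take r) r N = X.take r ++ [[N]] := by
      unfold addAtRow
      rw [if_neg (by rw [List.length_take]; omega)]
    rw [h3]
    conv_rhs => rw [← List.take_append_drop r X]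
    rw [drop_single hre, hR']
    rfl
  · have hfil : (X.set r R').filter (fun l => !l.isEmpty) = X.set r R' := by
      rw [List.filter_eq_self]
      intro R hRs
      rcases List.mem_or_eq_of_mem_set hRs with hmem | rfl
      · simpa [List.isEmpty_iff] using hrows R hmem
      · simpa [List.isEmpty_iff] using hR
    rw [hfil]
    have hlt : r < (X.set r R').length := by simpa using hrlen
    have h4 : addAtRow (X.set r R') r N = (X.set r R').set r ((X.set r R').getD r [] ++ [N]) := by
      unfold addAtRow
      rw [if_pos hlt]
    rw [h4, List.getD_eq_getElem _ _ hlt, List.getElem_set_self, List.set_set, ← hR',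
      set_getD_self hrlen]

theorem removable_getD {lam : List ℕ} {r i : ℕ} (hrL : r < lam.length)
    (hrem : lam.getD (r+1) 0 < lam.getD r 0)
    (hcount : removableCount lam (r+1) = i) (hi : 1 ≤ i) :
    (removableRows lam).getD (i-1) 0 = r := by
  unfold removableRows
  unfold removableCount at hcount
  set p := fun t => decide (lam.getD (t+1) 0 < lam.getD t 0) with hp
  have hsplit : List.range lam.length
      = List.range (r+1) ++ List.range' (r+1) (lam.length - (r+1)) := by
    have h0 := List.range'_append (s := 0) (m := r+1) (n := lam.length - (r+1)) (step := 1)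
    simp only [Nat.zero_add, Nat.one_mul] at h0
    rw [List.range_eq_range', List.range_eq_range']
    conv_lhs => rw [show lam.length = lam.length - (r+1) + (r+1) from by omega]
    rw [Nat.add_comm (r+1)] at h0
    exact h0.symm
  rw [hsplit, List.filter_append]
  have hsplit2 : (List.range (r+1)).filter p = (List.range r).filter p ++ [r] := by
    rw [List.range_succ, List.filter_append]
    congr 1
    have : p r = true := by rw [hp]; simpa using hrem
    simp [List.filter, this]
  rw [hsplit2]
  have hlen' : ((List.range r).filter p).length = i - 1 := by
    rw [hsplit2] at hcount
    rw [List.length_append] at hcount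
    simp at hcount
    omega
  rw [List.append_assoc, List.getD_append_right _ _ _ _ (by omega), hlen']
  simp


/-! more defs copied from the problem file -/
theorem sum_map_add (l : List ℕ) (f g : ℕ → ℕ) :
    (l.map (fun c => f c + g c)).sum = (l.map f).sum + (l.map g).sum := by
  induction l with
  | nil => rfl
  | cons a l ih => simp only [List.map_cons, List.sum_cons, ih]; omega

theorem sum_ite_eq_min (M a : ℕ) :
    ((List.range M).map (fun c => if c < a then 1 else 0)).sum = min M a := by
  induction M with
  | zero => simp
  | succ M ih =>
    rw [List.range_succ, List.map_append, List.sum_append, ih]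
    by_cases h : M < a <;> simp [h] <;> omega

theorem colHeight_cons (a : ℕ) (l : List ℕ) :
    colHeight (a :: l) = fun c => (if c < a then 1 else 0) + colHeight l c := by
  funext c
  unfold colHeight
  rw [List.filter_cons]
  by_cases h : c < a <;> simp [h] <;> omega

theorem sum_colHeight_le (l : List ℕ) (M : ℕ) :
    ((List.range M).map (colHeight l)).sum ≤ l.sum := by
  induction l generalizing M with
  | nil =>
    have h : colHeight [] = fun _ : ℕ => 0 := by funext c; rfl
    rw [h]
    simp [List.sum_eq_zero]
  | cons a l ih =>
    rw [colHeight_cons, sum_map_add, sum_ite_eq_min]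
    have := ih M
    simp only [List.sum_cons]
    omega

theorem colStd_length (lam : List ℕ) : (colStd lam).length = lam.length := by
  simp [colStd]

theorem colStd_getD {lam : List ℕ} {t : ℕ} (h : t < lam.length) :
    (colStd lam).getD t [] = (List.range (lam.getD t 0)).map
      (fun j => ((List.range j).map (colHeight lam)).sum + t + 1) := by
  unfold colStd
  exact getD_map_range _ _ h

theorem colHeight_ge {lam : List ℕ} (hmono : ∀ a b : ℕ, a ≤ b → lam.getD b 0 ≤ lam.getD a 0)
    {t c : ℕ} (ht : t < lam.length) (hc : c < lam.getD t 0) : t + 1 ≤ colHeight lam c := by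
  unfold colHeight
  have h1 : (lam.take (t+1)).filter (fun x => decide (c < x)) = lam.take (t+1) := by
    rw [List.filter_eq_self]
    intro x hx
    obtain ⟨s, hs, rfl⟩ := List.mem_take_iff_getElem.mp hx
    have hsL : s < lam.length := by
      rw [lt_min_iff] at hs; exact hs.2
    have h2 : lam.getD t 0 ≤ lam.getD s 0 := hmono s t (by rw [lt_min_iff] at hs; omega)
    rw [List.getD_eq_getElem _ _ hsL] at h2
    simp only [decide_eq_true_eq]
    omega
  have h2 : (lam.filter (fun x => decide (c < x))).length
      = ((lam.take (t+1)).filter (fun x => decide (c < x))).length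
        + ((lam.drop (t+1)).filter (fun x => decide (c < x))).length := by
    conv_lhs => rw [← List.take_append_drop (t+1) lam]
    rw [List.filter_append, List.length_append]
  rw [h2, h1, List.length_take]
  omega

theorem colStd_entry_le {lam : List ℕ} (hmono : ∀ a b : ℕ, a ≤ b → lam.getD b 0 ≤ lam.getD a 0)
    {t : ℕ} (ht : t < lam.length) {v : ℕ} (hv : v ∈ (colStd lam).getD t []) : v ≤ lam.sum := by
  rw [colStd_getD ht] at hv
  obtain ⟨j, hj, rfl⟩ := List.mem_map.mp hv
  rw [List.mem_range] at hj
  have hh := colHeight_ge hmono ht hj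
  have hstep : ((List.range (j+1)).map (colHeight lam)).sum
      = ((List.range j).map (colHeight lam)).sum + colHeight lam j := by
    rw [List.range_succ, List.map_append, List.sum_append]; simp
  have := sum_colHeight_le lam (j+1)
  omega

theorem length_le_sum (l : List ℕ) (h : ∀ x ∈ l, 0 < x) : l.length ≤ l.sum := by
  induction l with
  | nil => simp
  | cons a t ih =>
    simp only [List.length_cons, List.sum_cons]
    have := h a (by simp)
    have := ih (fun x hx => h x (by simp [hx]))
    omega

theorem getD_set_ne {X : List (List ℕ)} {r j : ℕ} (h : j ≠ r) (R : List ℕ) :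
    (X.set r R).getD j [] = X.getD j [] := by
  rcases Nat.lt_or_ge j X.length with hj | hj
  · rw [List.getD_eq_getElem _ _ (by simpa using hj), List.getD_eq_getElem _ _ hj]
    exact List.getElem_set_ne (by omega : r ≠ j) _
  · rw [List.getD_eq_default _ _ (by simpa using hj), List.getD_eq_default _ _ hj]

theorem getD_filter_prefix {X : List (List ℕ)} {r m : ℕ} (hm : m < r) (hr : r ≤ X.length)
    (hne : ∀ j, j < r → X.getD j [] ≠ []) :
    (X.filter (fun l => !l.isEmpty)).getD m [] = X.getD m [] := by
  have hsp : X = X.take r ++ X.drop r := (List.take_append_drop _ _).symm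
  have h1 : (X.take r).filter (fun l => !l.isEmpty) = X.take r := by
    rw [List.filter_eq_self]
    intro R hR
    obtain ⟨s, hs, rfl⟩ := List.mem_take_iff_getElem.mp hR
    have hsX : s < X.length := by rw [lt_min_iff] at hs; exact hs.2
    have := hne s (by rw [lt_min_iff] at hs; omega)
    rw [List.getD_eq_getElem _ _ hsX] at this
    simpa [List.isEmpty_iff]
  have hlen : (X.take r).length = r := by rw [List.length_take]; omega
  conv_lhs => rw [hsp]
  rw [List.filter_append, h1, List.getD_append _ _ _ _ (by omega), List.getD_eq_getElem _ _ (by omega),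
    List.getElem_take, ← List.getD_eq_getElem _ _ (by omega : m < X.length)]


theorem cssI_facts {n : ℕ} {lam : List ℕ} (hsort : lam.Pairwise (· ≥ ·))
    (hpos : ∀ x ∈ lam, 0 < x) (hsum : lam.sum = n) {i : ℕ} (hi1 : 1 ≤ i)
    (hiL : i - 1 < (removableRows lam).length) :
    addAtRow (deleteMax (cssI lam i)) ((removableRows lam).getD (i - 1) 0) n = cssI lam i ∧
    ∀ m < (removableRows lam).getD (i - 1) 0,
      (n - (removableRows lam).getD (i - 1) 0 + m) ∈ (deleteMax (cssI lam i)).getD m [] := by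
  set row0 := (removableRows lam).getD (i - 1) 0 with hrow0def
  have hmem : row0 ∈ removableRows lam := by
    rw [hrow0def, List.getD_eq_getElem _ _ hiL]; exact List.getElem_mem hiL
  have hmem2 := List.mem_filter.mp hmem
  have hrow0L : row0 < lam.length := List.mem_range.mp hmem2.1
  have hrem : lam.getD (row0+1) 0 < lam.getD row0 0 := by simpa using hmem2.2
  have hposD : ∀ t, t < lam.length → 0 < lam.getD t 0 := fun t ht => by
    rw [List.getD_eq_getElem _ _ ht]; exact hpos _ (List.getElem_mem ht)
  set L := lam.length with hLdef
  set f : ℕ → ℕ := fun t => if t ≤ row0 then lam.getD t 0 - 1 else lam.getD t 0 with hf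
  set lam' := (List.range L).map f with hlam'
  have hlam'len : lam'.length = L := by rw [hlam']; simp
  have hlam'getD : ∀ t, t < L → lam'.getD t 0 = f t := by
    intro t ht; rw [hlam']; exact getD_map_range f 0 ht
  have hlam'getD0 : ∀ t, L ≤ t → lam'.getD t 0 = 0 :=
    fun t ht => List.getD_eq_default _ _ (by omega)
  have hmono : ∀ a b : ℕ, a ≤ b → lam'.getD b 0 ≤ lam'.getD a 0 := by
    intro a b hab
    rcases Nat.lt_or_ge b L with hb | hb
    · have ha : a < L := by omega
      rw [hlam'getD a ha, hlam'getD b hb]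
      simp only [hf]
      have h1 := getD_antitone hsort hab
      by_cases hbr : b ≤ row0
      · rw [if_pos (by omega : a ≤ row0), if_pos hbr]; omega
      · by_cases har : a ≤ row0
        · have h2 := getD_antitone hsort (show row0 + 1 ≤ b by omega)
          have h3 := getD_antitone hsort (show a ≤ row0 from har)
          rw [if_pos har, if_neg hbr]
          omega
        · rw [if_neg har, if_neg hbr]; exact h1
    · rw [hlam'getD0 b (by omega)]; exact Nat.zero_le _
  have hLn : L ≤ n := by have := length_le_sum lam hpos; omega
  have hn1 : 1 ≤ n := by omega
  have hsum' : lam'.sum + (row0 + 1) = n := by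
    rw [← hsum]
    have key : ∀ M, M ≤ L → ((List.range M).map f).sum + min M (row0+1)
        = ((List.range M).map (fun t => lam.getD t 0)).sum := by
      intro M
      induction M with
      | zero => intro _; simp
      | succ M ih =>
        intro hM1
        rw [List.range_succ, List.map_append, List.map_append, List.sum_append, List.sum_append]
        have ihe := ih (by omega)
        simp only [List.map_cons, List.map_nil, List.sum_cons, List.sum_nil]
        have hposM := hposD M (by omega)
        by_cases hMr : M ≤ row0
        · have hfM : f M = lam.getD M 0 - 1 := by simp [hf, hMr]
          rw [hfM]; omega
        · have hfM : f M = lam.getD M 0 := by simp [hf, hMr]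
          rw [hfM]; omega
    have h2 := key L le_rfl
    rw [hLdef, map_getD_range_self lam] at h2
    rw [hlam']
    have hm : min L (row0+1) = row0 + 1 := by omega
    rw [hm] at h2
    rw [hLdef]
    exact h2
  set base := colStd lam' with hbase
  have hbgetD : ∀ t, t < L → base.getD t [] = (List.range (lam'.getD t 0)).map
      (fun j => ((List.range j).map (colHeight lam')).sum + t + 1) := by
    intro t ht
    rw [hbase]
    exact colStd_getD (by omega)
  have hblen : ∀ t, t < L → (base.getD t []).length = lam'.getD t 0 := by
    intro t ht; rw [hbgetD t ht]; simp
  have hbent : ∀ t, t < L → ∀ v ∈ base.getD t [], v ≤ n - (row0+1) := by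
    intro t ht v hv
    have h2 := colStd_entry_le hmono (t := t) (by omega) (hbase ▸ hv)
    omega
  set g : ℕ → List ℕ := fun t =>
    if t ≤ row0 then (base.getD t []) ++ [lam.sum - (row0 - t)] else base.getD t [] with hg
  have hC : cssI lam i = (List.range L).map g := rfl
  have hCget : ∀ t, t < L → (cssI lam i).getD t [] = g t := by
    intro t ht; rw [hC]; exact getD_map_range g [] ht
  have hClen : (cssI lam i).length = L := by rw [hC]; simp
  have hrows_ne : ∀ R ∈ cssI lam i, R ≠ [] := by
    intro R hR
    rw [hC] at hR
    obtain ⟨t, ht, rfl⟩ := List.mem_map.mp hR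
    rw [List.mem_range] at ht
    by_cases htr : t ≤ row0
    · simp [hg, htr]
    · simp only [hg, if_neg htr]
      intro hemp
      have h1 := hblen t ht
      rw [hemp] at h1
      have h2 := hlam'getD t ht
      have h3 := hposD t ht
      simp only [hf, if_neg htr] at h2
      simp only [List.length_nil] at h1
      omega
  have hflatlen : (cssI lam i).flatten.length = n := by
    rw [List.length_flatten, hC, List.map_map]
    have he : (List.range L).map (List.length ∘ g) = (List.range L).map (fun t => lam.getD t 0) := by
      apply List.map_congr_left
      intro t ht
      rw [List.mem_range] at ht
      have hpt := hposD t ht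
      by_cases htr : t ≤ row0
      · have hl2 : lam'.getD t 0 = lam.getD t 0 - 1 := by
          rw [hlam'getD t ht]; simp [hf, htr]
        simp only [Function.comp, hg, if_pos htr, List.length_append, hblen t ht, hl2,
          List.length_singleton]
        omega
      · have hl2 : lam'.getD t 0 = lam.getD t 0 := by
          rw [hlam'getD t ht]; simp [hf, htr]
        simp only [Function.comp, hg, if_neg htr, hblen t ht, hl2]
    rw [he, hLdef, map_getD_range_self lam, hsum]
  have hrowOf : rowOf (cssI lam i) n = row0 := by
    apply findIdx_rows (by omega : row0 < (cssI lam i).length)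
    · rw [hCget row0 hrow0L]
      simp only [hg, if_pos (le_refl row0)]
      have he : lam.sum - (row0 - row0) = n := by omega
      rw [he]
      simp [List.contains_iff_mem]
    · intro j hj
      rw [hCget j (by omega)]
      simp only [hg, if_pos (by omega : j ≤ row0), List.contains]
      rw [Bool.eq_false_iff]
      intro hcon
      have hmemn := List.elem_iff.mp hcon
      rcases List.mem_append.mp hmemn with hmb | hms
      · have := hbent j (by omega) n hmb
        omega
      · rw [List.mem_singleton] at hms
        omega
  have hlast : ∃ R', (cssI lam i).getD row0 [] = R' ++ [n] := by
    refine ⟨base.getD row0 [], ?_⟩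
    rw [hCget row0 hrow0L]
    simp only [hg, if_pos (le_refl row0)]
    have he : lam.sum - (row0 - row0) = n := by omega
    rw [he]
  have hemp : ((cssI lam i).getD row0 []).length = 1 → row0 + 1 = (cssI lam i).length := by
    intro h1
    rw [hCget row0 hrow0L] at h1
    simp only [hg, if_pos (le_refl row0), List.length_append, List.length_singleton] at h1
    have h2 := hblen row0 hrow0L
    by_contra hne
    have hL2 : row0 + 1 < L := by omega
    have h4 := hposD (row0+1) hL2
    have h3 := hlam'getD row0 hrow0L
    simp only [hf, if_pos (le_refl row0)] at h3
    omega
  refine ⟨addAtRow_deleteMax hrows_ne hflatlen hrowOf hlast hemp, ?_⟩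
  intro m hm
  unfold deleteMax
  simp only
  rw [hflatlen, hrowOf]
  have hset_ne : ∀ j, j < row0 →
      ((cssI lam i).set row0 ((cssI lam i).getD row0 []).dropLast).getD j []
        = (cssI lam i).getD j [] :=
    fun j hj => getD_set_ne (by omega) _
  rw [getD_filter_prefix hm (by rw [List.length_set]; omega)
    (fun j hj => by
      rw [hset_ne j hj]
      have hjL : j < (cssI lam i).length := by omega
      rw [List.getD_eq_getElem _ _ hjL]
      exact hrows_ne _ (List.getElem_mem hjL))]
  rw [hset_ne m hm, hCget m (by omega)]
  simp only [hg, if_pos (by omega : m ≤ row0)]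
  have he : lam.sum - (row0 - m) = n - row0 + m := by omega
  rw [he]
  simp


/-! remaining defs from the problem file -/
theorem syt_facts {n : ℕ} {lam : List ℕ} {T : List (List ℕ)}
    (hpos : ∀ x ∈ lam, 0 < x) (hsum : lam.sum = n) (hn1 : 1 ≤ n)
    (hT : IsSYT lam T) {i : ℕ} (hi1 : 1 ≤ i) (hiT : idx T = i) :
    addAtRow (deleteMax T) ((removableRows lam).getD (i - 1) 0) n = T := by
  obtain ⟨hshape, hrowsort, hcol, hperm⟩ := hT
  rw [hsum] at hperm
  have hTlen : T.length = lam.length := by rw [← hshape]; simp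
  have hposD : ∀ t, t < lam.length → 0 < lam.getD t 0 := fun t ht => by
    rw [List.getD_eq_getElem _ _ ht]; exact hpos _ (List.getElem_mem ht)
  have hflatlenT : T.flatten.length = n := by
    rw [List.length_flatten, hshape, hsum]
  have hmemn : n ∈ T.flatten := by
    rw [hperm.mem_iff, List.mem_range'_1]
    omega
  have hle : ∀ v ∈ T.flatten, v ≤ n := by
    intro v hv
    have := List.mem_range'_1.mp (hperm.mem_iff.mp hv)
    omega
  obtain ⟨hmemr, hrlt⟩ := rowOf_mem hmemn
  set r := rowOf T n with hrdef
  have hsorted_r : (T.getD r []).Pairwise (· < ·) := by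
    apply hrowsort
    rw [List.getD_eq_getElem _ _ hrlt]
    exact List.getElem_mem hrlt
  have hmax_r : ∀ y ∈ T.getD r [], y ≤ n := fun y hy => hle y (mem_flatten_of_getD hy)
  obtain ⟨R', hR'⟩ := sorted_max_last hsorted_r hmemr hmax_r
  have hlen_t : ∀ t, t < T.length → (T.getD t []).length = lam.getD t 0 := by
    intro t ht
    rw [len_getD ht, hshape]
  have hrem : lam.getD (r+1) 0 < lam.getD r 0 := by
    rcases Nat.lt_or_ge (r+1) T.length with hr1 | hr1
    · by_contra hge
      push_neg at hge
      have hlr : (T.getD r []).length = R'.length + 1 := by rw [hR']; simp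
      have hcle : R'.length < (T.getD (r+1) []).length := by
        rw [hlen_t (r+1) hr1]
        have := hlen_t r (by omega)
        omega
      have hc2 := hcol r R'.length hr1 hcle
      have he1 : entryAt T r R'.length = n := by
        unfold entryAt
        rw [hR', List.getD_append_right _ _ _ _ (le_refl _)]
        simp
      have he2 : entryAt T (r+1) R'.length ≤ n := by
        apply hle
        apply mem_flatten_of_getD (j := r+1)
        unfold entryAt
        rw [List.getD_eq_getElem _ _ hcle]
        exact List.getElem_mem hcle
      omega
    · have h0 : lam.getD (r+1) 0 = 0 := List.getD_eq_default _ _ (by omega)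
      have h1 : 0 < lam.getD r 0 := by
        rw [← hlen_t r hrlt, hR']
        simp
      omega
  have hcount : removableCount lam (r + 1) = i := by
    have hidx : idx T = removableCount lam (r + 1) := by
      unfold idx
      rw [hshape, hflatlenT]
    rw [← hidx, hiT]
  have hr0 : (removableRows lam).getD (i-1) 0 = r :=
    removable_getD (by omega) hrem hcount hi1
  have hempT : ((T.getD r []).length = 1) → r + 1 = T.length := by
    intro h1
    by_contra hne
    have hr1 : r + 1 < T.length := by omega
    have h2 := hlen_t (r+1) hr1
    have h3 := hlen_t r hrlt
    have h4 := hposD (r+1) (by omega)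
    omega
  have hrowsne : ∀ R ∈ T, R ≠ [] := by
    intro R hR
    obtain ⟨j, hj, rfl⟩ := List.mem_iff_getElem.1 hR
    intro hemp
    have h2 := hlen_t j hj
    rw [List.getD_eq_getElem _ _ hj, hemp] at h2
    simp only [List.length_nil] at h2
    have h4 := hposD j (by omega)
    omega
  rw [hr0]
  exact addAtRow_deleteMax hrowsne hflatlenT hrdef.symm ⟨R', hR'⟩ hempT

/-! facts about one-line notation -/

theorem oneLine_nodup (n : ℕ) (v : Equiv.Perm (Fin n)) : (oneLine n v).Nodup := by
  unfold oneLine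
  refine List.Nodup.map ?_ (List.nodup_finRange n)
  intro a b hab
  simp only [Nat.add_right_cancel_iff] at hab
  exact v.injective (Fin.ext hab)

theorem oneLine_length (n : ℕ) (v : Equiv.Perm (Fin n)) : (oneLine n v).length = n := by
  simp [oneLine]

theorem oneLine_le (n : ℕ) (v : Equiv.Perm (Fin n)) : ∀ y ∈ oneLine n v, y ≤ n := by
  intro y hy
  obtain ⟨j, _, rfl⟩ := List.mem_map.mp hy
  have := (v j).isLt
  omega



/-- If `u ↝ (T, CSS_i(lam))` and `ũ ↝ (d_i T, d_i CSS_i(lam))` under RSK, where the `i`-th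
removable box of `lam` lies in row `k` (1-based), then the one-line notation of `u` is that of
`ũ` with the value `n` inserted after the `(n-k)`-th entry. -/
theorem rsk_insert_largest (n : ℕ) (lam : List ℕ) (hlam : IsPartition n lam)
    (i : ℕ) (hi1 : 1 ≤ i) (hi2 : i ≤ numRemovable lam)
    (k : ℕ) (hk : k = (removableRows lam).getD (i - 1) 0 + 1)
    (T : List (List ℕ)) (hT : IsSYT lam T) (hiT : idx T = i)
    (u : Perm (Fin n)) (hu : RSKmap n u = (T, cssI lam i))
    (ut : Perm (Fin (n - 1)))
    (hut : RSKmap (n - 1) ut = (deleteMax T, deleteMax (cssI lam i))) :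
    oneLine n u =
      (oneLine (n - 1) ut).take (n - k) ++ n :: (oneLine (n - 1) ut).drop (n - k) := by
  obtain ⟨hsort, hpos, hsum⟩ := hlam
  have hnum : numRemovable lam = (removableRows lam).length := by
    unfold numRemovable removableCount removableRows
    rfl
  have hiL : i - 1 < (removableRows lam).length := by omega
  have hmem : (removableRows lam).getD (i-1) 0 ∈ removableRows lam := by
    rw [List.getD_eq_getElem _ _ hiL]; exact List.getElem_mem hiL
  have hrow0L : (removableRows lam).getD (i-1) 0 < lam.length :=
    List.mem_range.mp (List.mem_filter.mp hmem).1
  have hLn : lam.length ≤ n := by have := length_le_sum lam hpos; omega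
  have hkn : k ≤ n := by omega
  have hk1 : 1 ≤ k := by omega
  have hn1 : 1 ≤ n := by omega
  set v := oneLine (n-1) ut with hv
  have hvlen : v.length = n - 1 := oneLine_length _ _
  have hvnd : v.Nodup := oneLine_nodup _ _
  have hvlt : ∀ y ∈ v, y < n := by
    intro y hy
    have := oneLine_le _ _ y hy
    omega
  have hutw : RSKword v 1 ([], []) = (deleteMax T, deleteMax (cssI lam i)) := hut
  obtain ⟨_, _, _, hqperm⟩ := chain v hvnd
  rw [hutw] at hqperm
  have hqperm2 : (deleteMax (cssI lam i)).flatten.Perm (List.range' 1 v.length) := hqperm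
  have hndQ : (deleteMax (cssI lam i)).flatten.Nodup :=
    hqperm2.nodup_iff.mpr List.nodup_range'
  obtain ⟨hcss1, hcss2⟩ := cssI_facts hsort hpos hsum hi1 hiL
  have hsyt := syt_facts hpos hsum hn1 hT hi1 hiT
  have hq : k - 1 = (removableRows lam).getD (i-1) 0 := by omega
  have hrows : ∀ m, m < k - 1 →
      newRow (stateAt v ((n-k) + m)).1 (v.getD ((n-k) + m) 0) = m := by
    intro m hm
    have hlab := chain_label v hvnd ((n-k) + m) (by omega)
    rw [hutw] at hlab
    have hlab2 : (n-k) + m + 1 ∈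
        (deleteMax (cssI lam i)).getD
          (newRow (stateAt v ((n-k) + m)).1 (v.getD ((n-k) + m) 0)) [] := hlab
    have hm' : m < (removableRows lam).getD (i-1) 0 := by omega
    have hmm := hcss2 m hm'
    have he : n - (removableRows lam).getD (i-1) 0 + m = (n-k) + m + 1 := by omega
    rw [he] at hmm
    exact mem_getD_unique hndQ hlab2 hmm
  have hins := insert_largest_chain (v := v) (n := n) (p := n - k) (q := k - 1)
      (by omega) hvnd hvlt hrows (k-1) le_rfl
  have hstate : stateAt v ((n-k) + (k-1)) = (deleteMax T, deleteMax (cssI lam i)) := by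
    unfold stateAt
    rw [show (n-k) + (k-1) = v.length from by omega, List.take_length, hutw]
  rw [hstate] at hins
  have htfull : (v.take (n-k) ++ n :: v.drop (n-k)).take ((n-k) + 1 + (k-1))
      = v.take (n-k) ++ n :: v.drop (n-k) := by
    apply List.take_of_length_le
    simp only [List.length_append, List.length_cons, List.length_take, List.length_drop]
    omega
  rw [htfull] at hins
  have hfin : RSKword (v.take (n-k) ++ n :: v.drop (n-k)) 1 ([],[]) = (T, cssI lam i) := by
    rw [hins]
    show (addAtRow (deleteMax T) (k-1) n,
      addAtRow (deleteMax (cssI lam i)) (k-1) ((n-k)+1+(k-1))) = _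
    rw [show (n-k)+1+(k-1) = n from by omega, hq, hsyt, hcss1]
  have hw2nd : (v.take (n-k) ++ n :: v.drop (n-k)).Nodup := by
    rw [List.nodup_middle, List.take_append_drop]
    exact List.nodup_cons.mpr ⟨fun hc => absurd (hvlt n hc) (by omega), hvnd⟩
  exact rsk_inj (oneLine_nodup _ _) hw2nd
    ((hu : RSKword (oneLine n u) 1 ([],[]) = (T, cssI lam i)).trans hfin.symm)

end KLPaper
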